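/- Let {X^{N,M}} be, for each M, a family satisfying the large deviation principle with rate function I_M, and suppose {X^{N,M}} is an exponentially good approximation of {X^N}. Then {X^N} satisfies the weak large deviation principle with rate function I(y) := sup_{ε>0} liminf_{M→∞} inf_{x ∈ B_ε(y)} I_M(x); that is, for every open set A ⊆ S, liminf_{N→∞} (1/N) log P(X^N ∈ A) ≥ −inf_{x∈A} I(x), and for every compact set B ⊆ S, limsup_{N→∞} (1/N) log P(X^N ∈ B) ≤ −inf_{x∈B} I(x). -/

import Mathlib

open Filter MeasureTheory
open scoped ENNReal

/-- The rescaled log-probability `(1/N) log P(X^N ∈ A)`, valued in the extended reals,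
with `log 0 = -∞`. -/
noncomputable def scaledLogProb {S : Type*} [MetricSpace S] [MeasurableSpace S]
    {Ω : Type*} [MeasurableSpace Ω] (P : Measure Ω) (X : ℕ → Ω → S) (A : Set S) (N : ℕ) :
    EReal :=
  (((N : ℝ)⁻¹ : ℝ) : EReal) * ENNReal.log (P (X N ⁻¹' A))

/-- The family `X^N` satisfies the large deviation lower bound for every open set,
with rate function `I`. -/
def LDPLowerBound {S : Type*} [MetricSpace S] [MeasurableSpace S]
    {Ω : Type*} [MeasurableSpace Ω] (P : Measure Ω) (X : ℕ → Ω → S) (I : S → ℝ≥0∞) : Prop :=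
  ∀ A : Set S, IsOpen A →
    -((⨅ x ∈ A, I x : ℝ≥0∞) : EReal) ≤ Filter.atTop.liminf (scaledLogProb P X A)

/-- The family `X^N` satisfies the large deviation upper bound for every closed set,
with rate function `I`. -/
def LDPUpperBound {S : Type*} [MetricSpace S] [MeasurableSpace S]
    {Ω : Type*} [MeasurableSpace Ω] (P : Measure Ω) (X : ℕ → Ω → S) (I : S → ℝ≥0∞) : Prop :=
  ∀ B : Set S, IsClosed B →
    Filter.atTop.limsup (scaledLogProb P X B) ≤ -((⨅ x ∈ B, I x : ℝ≥0∞) : EReal)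

/-- `X^{N,M}` is an exponentially good approximation of `X^N`. -/
def ExpGoodApprox {S : Type*} [MetricSpace S] [MeasurableSpace S]
    {Ω : Type*} [MeasurableSpace Ω] (P : Measure Ω)
    (X : ℕ → Ω → S) (XM : ℕ → ℕ → Ω → S) : Prop :=
  ∀ ε : ℝ, 0 < ε →
    Filter.Tendsto
      (fun M => Filter.atTop.limsup
        (fun (N : ℕ) => (((N : ℝ)⁻¹ : ℝ) : EReal) *
          ENNReal.log (P {ω | ε < dist (X N ω) (XM M N ω)})))
      Filter.atTop (nhds (⊥ : EReal))

/-- The candidate rate function `I(y) = sup_{ε>0} liminf_{M→∞} inf_{x ∈ B_ε(y)} I_M(x)`. -/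
noncomputable def approxRate {S : Type*} [MetricSpace S] (IM : ℕ → S → ℝ≥0∞) (y : S) : ℝ≥0∞ :=
  ⨆ (ε : ℝ) (_ : 0 < ε), Filter.atTop.liminf (fun M => ⨅ x ∈ Metric.ball y ε, IM M x)

/-! ### Auxiliary machinery: exponential bounds vs. limsup/liminf of scaled log-probabilities -/

noncomputable def scaledSeq (p : ℕ → ℝ≥0∞) (N : ℕ) : EReal :=
  (((N : ℝ)⁻¹ : ℝ) : EReal) * ENNReal.log (p N)

/-- `p N` is eventually bounded above by `exp(c + N t)` for some constant `c`. -/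
def ExpUB (p : ℕ → ℝ≥0∞) (t : ℝ) : Prop :=
  ∃ c : ℝ, ∀ᶠ N : ℕ in atTop, p N ≤ EReal.exp ((c + N * t : ℝ) : EReal)

/-- `p N` is eventually bounded below by `exp(c + N t)` for some constant `c`. -/
def ExpLB (p : ℕ → ℝ≥0∞) (t : ℝ) : Prop :=
  ∃ c : ℝ, ∀ᶠ N : ℕ in atTop, EReal.exp ((c + N * t : ℝ) : EReal) ≤ p N

lemma scaled_le_iff {N : ℕ} (hN : 0 < N) {L : EReal} {t : ℝ} :
    (((N : ℝ)⁻¹ : ℝ) : EReal) * L ≤ (t : EReal) ↔ L ≤ (((N : ℝ) * t : ℝ) : EReal) := by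
  have hNR : (0 : ℝ) < (N : ℝ) := by exact_mod_cast hN
  have hb : (0 : EReal) < ((N : ℝ) : EReal) := by exact_mod_cast hNR
  have hb' : ((N : ℝ) : EReal) ≠ ⊤ := EReal.coe_ne_top _
  have h1 : (((N : ℝ)⁻¹ : ℝ) : EReal) * L = L / ((N : ℝ) : EReal) := by
    rw [EReal.coe_inv, EReal.div_eq_inv_mul]
  rw [h1, EReal.div_le_iff_le_mul hb hb', EReal.coe_mul]

lemma le_scaled_iff {N : ℕ} (hN : 0 < N) {L : EReal} {t : ℝ} :
    (t : EReal) ≤ (((N : ℝ)⁻¹ : ℝ) : EReal) * L ↔ (((N : ℝ) * t : ℝ) : EReal) ≤ L := by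
  have hNR : (0 : ℝ) < (N : ℝ) := by exact_mod_cast hN
  have hb : (0 : EReal) < ((N : ℝ) : EReal) := by exact_mod_cast hNR
  have hb' : ((N : ℝ) : EReal) ≠ ⊤ := EReal.coe_ne_top _
  have h1 : (((N : ℝ)⁻¹ : ℝ) : EReal) * L = L / ((N : ℝ) : EReal) := by
    rw [EReal.coe_inv, EReal.div_eq_inv_mul]
  rw [h1, EReal.le_div_iff_mul_le hb hb', EReal.coe_mul, mul_comm]

lemma tendsto_aux (c t : ℝ) :
    Tendsto (fun N : ℕ => ((c / N + t : ℝ) : EReal)) atTop (nhds (t : EReal)) := by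
  rw [EReal.tendsto_coe]
  have := (tendsto_const_div_atTop_nhds_zero_nat c).add_const t
  simpa using this

lemma limsup_scaled_le_of_expUB {p : ℕ → ℝ≥0∞} {t : ℝ} (h : ExpUB p t) :
    atTop.limsup (scaledSeq p) ≤ (t : EReal) := by
  obtain ⟨c, hc⟩ := h
  have key : ∀ᶠ N : ℕ in atTop, scaledSeq p N ≤ ((c / N + t : ℝ) : EReal) := by
    filter_upwards [hc, eventually_ge_atTop 1] with N h1 h2
    have hN : 0 < N := h2
    rw [scaledSeq, scaled_le_iff hN]
    have : ((N : ℝ) * (c / N + t) : ℝ) = c + N * t := by field_simp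
    rw [this]
    calc ENNReal.log (p N) ≤ ENNReal.log (EReal.exp ((c + N * t : ℝ) : EReal)) :=
          ENNReal.log_monotone h1
      _ = ((c + N * t : ℝ) : EReal) := EReal.log_exp _
  calc atTop.limsup (scaledSeq p) ≤ atTop.limsup (fun N : ℕ => ((c / N + t : ℝ) : EReal)) :=
        limsup_le_limsup key
    _ = (t : EReal) := (tendsto_aux c t).limsup_eq

lemma le_liminf_scaled_of_expLB {p : ℕ → ℝ≥0∞} {t : ℝ} (h : ExpLB p t) :
    (t : EReal) ≤ atTop.liminf (scaledSeq p) := by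
  obtain ⟨c, hc⟩ := h
  have key : ∀ᶠ N : ℕ in atTop, ((c / N + t : ℝ) : EReal) ≤ scaledSeq p N := by
    filter_upwards [hc, eventually_ge_atTop 1] with N h1 h2
    have hN : 0 < N := h2
    rw [scaledSeq, le_scaled_iff hN]
    have : ((N : ℝ) * (c / N + t) : ℝ) = c + N * t := by field_simp
    rw [this]
    calc ((c + N * t : ℝ) : EReal) = ENNReal.log (EReal.exp ((c + N * t : ℝ) : EReal)) :=
          (EReal.log_exp _).symm
      _ ≤ ENNReal.log (p N) := ENNReal.log_monotone h1
  calc (t : EReal) = atTop.liminf (fun N : ℕ => ((c / N + t : ℝ) : EReal)) :=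
        ((tendsto_aux c t).liminf_eq).symm
    _ ≤ atTop.liminf (scaledSeq p) := liminf_le_liminf key

lemma expUB_of_limsup_lt {p : ℕ → ℝ≥0∞} {t : ℝ} (h : atTop.limsup (scaledSeq p) < (t : EReal)) :
    ExpUB p t := by
  refine ⟨0, ?_⟩
  filter_upwards [eventually_lt_of_limsup_lt h, eventually_ge_atTop 1] with N h1 h2
  have hN : 0 < N := h2
  have hle : scaledSeq p N ≤ (t : EReal) := le_of_lt h1
  rw [scaledSeq, scaled_le_iff hN] at hle
  have : ENNReal.log (p N) ≤ ((0 + N * t : ℝ) : EReal) := by rwa [zero_add]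
  calc p N = EReal.exp (ENNReal.log (p N)) := (ENNReal.exp_log _).symm
    _ ≤ EReal.exp ((0 + N * t : ℝ) : EReal) := EReal.exp_monotone this

lemma expLB_of_lt_liminf {p : ℕ → ℝ≥0∞} {t : ℝ} (h : (t : EReal) < atTop.liminf (scaledSeq p)) :
    ExpLB p t := by
  refine ⟨0, ?_⟩
  filter_upwards [eventually_lt_of_lt_liminf h, eventually_ge_atTop 1] with N h1 h2
  have hN : 0 < N := h2
  have hle : (t : EReal) ≤ scaledSeq p N := le_of_lt h1
  rw [scaledSeq, le_scaled_iff hN] at hle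
  have : ((0 + N * t : ℝ) : EReal) ≤ ENNReal.log (p N) := by rwa [zero_add]
  calc EReal.exp ((0 + N * t : ℝ) : EReal) ≤ EReal.exp (ENNReal.log (p N)) :=
        EReal.exp_monotone this
    _ = p N := ENNReal.exp_log _

section
variable {p q r : ℕ → ℝ≥0∞} {t t' : ℝ}

lemma ExpUB.mono_p (h : ExpUB q t) (hpq : ∀ᶠ N : ℕ in atTop, p N ≤ q N) : ExpUB p t := by
  obtain ⟨c, hc⟩ := h
  exact ⟨c, by filter_upwards [hc, hpq] with N h1 h2 using h2.trans h1⟩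

lemma ExpUB.add (h1 : ExpUB p t) (h2 : ExpUB q t) : ExpUB (fun N => p N + q N) t := by
  obtain ⟨c1, hc1⟩ := h1
  obtain ⟨c2, hc2⟩ := h2
  refine ⟨Real.log (Real.exp c1 + Real.exp c2), ?_⟩
  filter_upwards [hc1, hc2] with N hN1 hN2
  have key : Real.exp (Real.log (Real.exp c1 + Real.exp c2) + N * t)
      = Real.exp (c1 + N * t) + Real.exp (c2 + N * t) := by
    rw [Real.exp_add, Real.exp_log (by positivity), Real.exp_add, Real.exp_add]
    ring
  calc p N + q N ≤ EReal.exp ((c1 + N * t : ℝ) : EReal) + EReal.exp ((c2 + N * t : ℝ) : EReal) :=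
        add_le_add hN1 hN2
    _ = EReal.exp ((Real.log (Real.exp c1 + Real.exp c2) + N * t : ℝ) : EReal) := by
        rw [EReal.exp_coe, EReal.exp_coe, EReal.exp_coe, key,
          ENNReal.ofReal_add (Real.exp_pos _).le (Real.exp_pos _).le]

lemma ExpUB.finsum {ι : Type*} (T : Finset ι) (f : ι → ℕ → ℝ≥0∞)
    (h : ∀ i ∈ T, ExpUB (f i) t) : ExpUB (fun N => ∑ i ∈ T, f i N) t := by
  classical
  induction T using Finset.induction_on with
  | empty => exact ⟨0, by filter_upwards with N; simp⟩
  | @insert a s hi ih =>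
    simp only [Finset.sum_insert hi]
    exact (h a (Finset.mem_insert_self a s)).add
      (ih fun i hiT => h i (Finset.mem_insert_of_mem hiT))

lemma ExpLB.sub (hq : ExpLB q t) (hr : ExpUB r t') (htt' : t' < t)
    (hqpr : ∀ N, q N ≤ p N + r N) : ExpLB p t := by
  obtain ⟨c, hc⟩ := hq
  obtain ⟨c', hc'⟩ := hr
  refine ⟨c - Real.log 2, ?_⟩
  have hev : ∀ᶠ N : ℕ in atTop, c' - c + Real.log 2 ≤ (N : ℝ) * (t - t') := by
    have h1 : Tendsto (fun N : ℕ => (N : ℝ) * (t - t')) atTop atTop :=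
      Tendsto.atTop_mul_const (by linarith) tendsto_natCast_atTop_atTop
    exact h1.eventually_ge_atTop _
  filter_upwards [hc, hc', hev] with N h1 h2 h3
  have hrle : r N ≤ ENNReal.ofReal (Real.exp (c' + N * t')) := by
    rw [← EReal.exp_coe]; exact h2
  have hqge : ENNReal.ofReal (Real.exp (c + N * t)) ≤ q N := by
    rw [← EReal.exp_coe]; exact h1
  rw [EReal.exp_coe]
  have hkey : ENNReal.ofReal (Real.exp (c - Real.log 2 + N * t)) + r N ≤ q N := by
    calc ENNReal.ofReal (Real.exp (c - Real.log 2 + N * t)) + r N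
        ≤ ENNReal.ofReal (Real.exp (c - Real.log 2 + N * t))
          + ENNReal.ofReal (Real.exp (c' + N * t')) := add_le_add_right hrle _
      _ = ENNReal.ofReal (Real.exp (c - Real.log 2 + N * t) + Real.exp (c' + N * t')) := by
          rw [ENNReal.ofReal_add (Real.exp_pos _).le (Real.exp_pos _).le]
      _ ≤ ENNReal.ofReal (Real.exp (c + N * t)) := by
          apply ENNReal.ofReal_le_ofReal
          have e1 : Real.exp (c' + N * t') ≤ Real.exp (c - Real.log 2 + N * t) :=
            Real.exp_le_exp.mpr (by nlinarith [h3])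
          have e2 : Real.exp (c + N * t)
              = 2 * Real.exp (c - Real.log 2 + N * t) := by
            have harr : c + (N : ℝ) * t = Real.log 2 + (c - Real.log 2 + N * t) := by ring
            rw [harr, Real.exp_add, Real.exp_log (by norm_num : (0:ℝ) < 2)]
          linarith
      _ ≤ q N := hqge
  have hrne : r N ≠ ⊤ := (hrle.trans_lt ENNReal.ofReal_lt_top).ne
  have h4 : ENNReal.ofReal (Real.exp (c - Real.log 2 + N * t)) + r N ≤ p N + r N :=
    hkey.trans (hqpr N)
  exact (ENNReal.add_le_add_iff_right hrne).mp h4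

end

theorem weak_LDP_of_expGoodApprox
    {S : Type*} [MetricSpace S] [MeasurableSpace S] [BorelSpace S]
    {Ω : Type*} [MeasurableSpace Ω] (P : Measure Ω) [IsProbabilityMeasure P]
    (X : ℕ → Ω → S) (XM : ℕ → ℕ → Ω → S)
    (hX : ∀ N, Measurable (X N)) (hXM : ∀ M N, Measurable (XM M N))
    (IM : ℕ → S → ℝ≥0∞)
    (hLDP : ∀ M, LDPLowerBound P (XM M) (IM M) ∧ LDPUpperBound P (XM M) (IM M))
    (hApprox : ExpGoodApprox P X XM) :
    (∀ A : Set S, IsOpen A →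
      -((⨅ x ∈ A, approxRate IM x : ℝ≥0∞) : EReal) ≤
        Filter.atTop.liminf (scaledLogProb P X A)) ∧
    (∀ B : Set S, IsCompact B →
      Filter.atTop.limsup (scaledLogProb P X B) ≤
        -((⨅ x ∈ B, approxRate IM x : ℝ≥0∞) : EReal)) := by
  constructor
  · -- Lower bound for open sets
    intro A hA
    by_contra hcon
    push_neg at hcon
    obtain ⟨t, ht1, ht2⟩ := EReal.exists_between_coe_real hcon
    -- t : ℝ, liminf < t < -(inf)
    set c₀ : ℝ≥0∞ := ⨅ x ∈ A, approxRate IM x with hc₀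
    have hcinf : (c₀ : EReal) < ((-t : ℝ) : EReal) := by
      have := EReal.neg_lt_neg_iff.mpr ht2
      rwa [neg_neg, ← EReal.coe_neg] at this
    have hmt : (0 : ℝ) < -t := by
      have h0 : (0 : EReal) ≤ (c₀ : EReal) := EReal.coe_ennreal_nonneg _
      have := h0.trans_lt hcinf
      exact_mod_cast this
    set ρ : ℝ≥0∞ := ENNReal.ofReal (-t) with hρ
    have hρcoe : (ρ : EReal) = ((-t : ℝ) : EReal) := by
      rw [hρ, EReal.coe_ennreal_ofReal, max_eq_left hmt.le]
    have hc₀ρ : c₀ < ρ := by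
      rw [← EReal.coe_ennreal_lt_coe_ennreal_iff, hρcoe]
      exact hcinf
    obtain ⟨y, hy⟩ := iInf_lt_iff.mp hc₀ρ
    obtain ⟨hyA, hy⟩ := iInf_lt_iff.mp hy
    obtain ⟨ε, hε, hball⟩ := Metric.isOpen_iff.mp hA y hyA
    -- liminf over M of inf over small ball is < ρ
    have hsmall : atTop.liminf (fun M => ⨅ x ∈ Metric.ball y (ε / 2), IM M x) < ρ := by
      refine lt_of_le_of_lt ?_ hy
      rw [approxRate]
      exact le_iSup₂ (f := fun (e : ℝ) (_ : 0 < e) =>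
        atTop.liminf (fun M => ⨅ x ∈ Metric.ball y e, IM M x)) (ε / 2) (by linarith)
    have hfreq : ∃ᶠ M in atTop, (⨅ x ∈ Metric.ball y (ε / 2), IM M x) < ρ :=
      frequently_lt_of_liminf_lt (by isBoundedDefault) hsmall
    have hevd : ∀ᶠ M in atTop,
        atTop.limsup (scaledSeq (fun N => P {ω | ε / 2 < dist (X N ω) (XM M N ω)}))
          < ((t - 1 : ℝ) : EReal) := by
      have := hApprox (ε / 2) (by linarith)
      exact this.eventually (Iio_mem_nhds (EReal.bot_lt_coe _))
    obtain ⟨M, hM1, hM2⟩ := (hfreq.and_eventually hevd).exists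
    -- lower LDP bound for XM M on the small ball
    have hlow := (hLDP M).1 (Metric.ball y (ε / 2)) Metric.isOpen_ball
    have htlt : (t : EReal) < -((⨅ x ∈ Metric.ball y (ε / 2), IM M x : ℝ≥0∞) : EReal) := by
      have h1 : ((⨅ x ∈ Metric.ball y (ε / 2), IM M x : ℝ≥0∞) : EReal) < ((-t : ℝ) : EReal) := by
        rw [← hρcoe]
        exact EReal.coe_ennreal_lt_coe_ennreal_iff.mpr hM1
      have := EReal.neg_lt_neg_iff.mpr h1
      rwa [EReal.coe_neg, neg_neg] at this
    have hliminfq : (t : EReal) <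
        atTop.liminf (scaledSeq (fun N => P (XM M N ⁻¹' Metric.ball y (ε / 2)))) :=
      htlt.trans_le hlow
    have hLB : ExpLB (fun N => P (XM M N ⁻¹' Metric.ball y (ε / 2))) t :=
      expLB_of_lt_liminf hliminfq
    have hUB : ExpUB (fun N => P {ω | ε / 2 < dist (X N ω) (XM M N ω)}) (t - 1) :=
      expUB_of_limsup_lt hM2
    have hincl : ∀ N, P (XM M N ⁻¹' Metric.ball y (ε / 2)) ≤
        P (X N ⁻¹' A) + P {ω | ε / 2 < dist (X N ω) (XM M N ω)} := by
      intro N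
      refine (measure_mono ?_).trans (measure_union_le _ _)
      intro ω hω
      by_cases hd : ε / 2 < dist (X N ω) (XM M N ω)
      · exact Or.inr hd
      · left
        apply hball
        rw [Metric.mem_ball]
        have h1 : dist (XM M N ω) y < ε / 2 := hω
        have h2 : dist (X N ω) (XM M N ω) ≤ ε / 2 := le_of_not_gt hd
        calc dist (X N ω) y ≤ dist (X N ω) (XM M N ω) + dist (XM M N ω) y := dist_triangle _ _ _
          _ < ε := by linarith
    have hLBp : ExpLB (fun N => P (X N ⁻¹' A)) t :=
      hLB.sub hUB (by linarith) hincl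
    have := le_liminf_scaled_of_expLB hLBp
    exact absurd ht1 (not_lt.mpr this)
  · -- Upper bound for compact sets
    intro B hB
    have hle0 : atTop.limsup (scaledLogProb P X B) ≤ (0 : EReal) := by
      have hub : ExpUB (fun N => P (X N ⁻¹' B)) 0 := by
        refine ⟨0, ?_⟩
        filter_upwards with N
        simp only [mul_zero, add_zero, Nat.cast_zero]
        calc P (X N ⁻¹' B) ≤ 1 := prob_le_one
          _ ≤ EReal.exp ((0 : ℝ) : EReal) := by simp
      exact limsup_scaled_le_of_expUB hub
    by_contra hcon
    push_neg at hcon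
    set c₀ : ℝ≥0∞ := ⨅ x ∈ B, approxRate IM x with hc₀
    obtain ⟨s₁, hs₁1, hs₁2⟩ := EReal.exists_between_coe_real hcon
    obtain ⟨s₂, hs₂1, hs₂2⟩ := EReal.exists_between_coe_real hs₁2
    have hs₂R : (s₁ : EReal) < (s₂ : EReal) := hs₂1
    have hs₁s₂ : s₁ < s₂ := by exact_mod_cast hs₂R
    have hs₂0 : s₂ < 0 := by
      have : (s₂ : EReal) < 0 := hs₂2.trans_le hle0
      exact_mod_cast this
    have hs₁0 : s₁ < 0 := lt_trans hs₁s₂ hs₂0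
    set ρ : ℝ≥0∞ := ENNReal.ofReal (-s₁) with hρ
    have hρcoe : (ρ : EReal) = ((-s₁ : ℝ) : EReal) := by
      rw [hρ, EReal.coe_ennreal_ofReal, max_eq_left (by linarith)]
    have hρc₀ : ρ < c₀ := by
      have h1 : ((-s₁ : ℝ) : EReal) < (c₀ : EReal) := by
        have := EReal.neg_lt_neg_iff.mpr hs₁1
        rwa [neg_neg, ← EReal.coe_neg] at this
      rw [← EReal.coe_ennreal_lt_coe_ennreal_iff, hρcoe]
      exact h1
    -- Choose for each point a radius
    have hchoice : ∀ y : S, ∃ e : ℝ, 0 < e ∧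
        (y ∈ B → ∀ᶠ M in atTop, ρ < ⨅ x ∈ Metric.ball y e, IM M x) := by
      intro y
      by_cases hy : y ∈ B
      · have h1 : ρ < approxRate IM y := by
          refine hρc₀.trans_le ?_
          exact iInf₂_le y hy
        rw [approxRate, lt_iSup_iff] at h1
        obtain ⟨e, h1⟩ := h1
        rw [lt_iSup_iff] at h1
        obtain ⟨he, h1⟩ := h1
        exact ⟨e, he, fun _ => eventually_lt_of_lt_liminf h1⟩
      · exact ⟨1, one_pos, fun hy' => absurd hy' hy⟩
    choose ε hεpos hεev using hchoice
    -- finite subcover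
    obtain ⟨T, hTB, hcov⟩ := hB.elim_nhds_subcover (fun y => Metric.ball y (ε y / 4))
      (fun y _ => Metric.ball_mem_nhds y (by have := hεpos y; linarith))
    -- choose M good for all y ∈ T
    have hev1 : ∀ᶠ M in atTop, ∀ y ∈ T, ρ < ⨅ x ∈ Metric.ball y (ε y), IM M x :=
      (eventually_all_finset T).mpr (fun y hy => hεev y (hTB y hy))
    have hev2 : ∀ᶠ M in atTop, ∀ y ∈ T,
        atTop.limsup (scaledSeq (fun N => P {ω | ε y / 4 < dist (X N ω) (XM M N ω)}))
          < (s₁ : EReal) :=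
      (eventually_all_finset T).mpr (fun y _ =>
        (hApprox (ε y / 4) (by have := hεpos y; linarith)).eventually
          (Iio_mem_nhds (EReal.bot_lt_coe _)))
    obtain ⟨M, hM1, hM2⟩ := (hev1.and hev2).exists
    -- each piece has exponential upper bound at level s₂
    have hpiece : ∀ y ∈ T, ExpUB (fun N =>
        P (XM M N ⁻¹' Metric.closedBall y (ε y / 2))
          + P {ω | ε y / 4 < dist (X N ω) (XM M N ω)}) s₂ := by
      intro y hyT
      have hcb : Metric.closedBall y (ε y / 2) ⊆ Metric.ball y (ε y) :=
        Metric.closedBall_subset_ball (by have := hεpos y; linarith)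
      have hinfle : ρ < ⨅ x ∈ Metric.closedBall y (ε y / 2), IM M x :=
        lt_of_lt_of_le (hM1 y hyT) (biInf_mono fun x hx => hcb hx)
      have hup := (hLDP M).2 (Metric.closedBall y (ε y / 2)) Metric.isClosed_closedBall
      have h1 : atTop.limsup
          (scaledSeq (fun N => P (XM M N ⁻¹' Metric.closedBall y (ε y / 2))))
          < (s₂ : EReal) := by
        refine lt_of_le_of_lt (hup.trans ?_) hs₂R
        have h2 : (ρ : EReal) ≤ ((⨅ x ∈ Metric.closedBall y (ε y / 2), IM M x : ℝ≥0∞) : EReal) :=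
          EReal.coe_ennreal_le_coe_ennreal_iff.mpr hinfle.le
        have h3 := EReal.neg_le_neg_iff.mpr h2
        rw [hρcoe, EReal.coe_neg, neg_neg] at h3
        exact h3
      have hU1 : ExpUB (fun N => P (XM M N ⁻¹' Metric.closedBall y (ε y / 2))) s₂ :=
        expUB_of_limsup_lt h1
      have hU2 : ExpUB (fun N => P {ω | ε y / 4 < dist (X N ω) (XM M N ω)}) s₂ :=
        expUB_of_limsup_lt ((hM2 y hyT).trans hs₂R)
      exact hU1.add hU2
    have hsumUB : ExpUB (fun N => ∑ y ∈ T,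
        (P (XM M N ⁻¹' Metric.closedBall y (ε y / 2))
          + P {ω | ε y / 4 < dist (X N ω) (XM M N ω)})) s₂ :=
      ExpUB.finsum T _ hpiece
    have hdom : ∀ᶠ N : ℕ in atTop, P (X N ⁻¹' B) ≤ ∑ y ∈ T,
        (P (XM M N ⁻¹' Metric.closedBall y (ε y / 2))
          + P {ω | ε y / 4 < dist (X N ω) (XM M N ω)}) := by
      filter_upwards with N
      have hincl : X N ⁻¹' B ⊆ ⋃ y ∈ T,
          ((XM M N ⁻¹' Metric.closedBall y (ε y / 2))
            ∪ {ω | ε y / 4 < dist (X N ω) (XM M N ω)}) := by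
        intro ω hω
        have hmem : X N ω ∈ ⋃ y ∈ T, Metric.ball y (ε y / 4) := hcov hω
        rw [Set.mem_iUnion₂] at hmem
        obtain ⟨y, hyT, hyball⟩ := hmem
        rw [Set.mem_iUnion₂]
        refine ⟨y, hyT, ?_⟩
        by_cases hd : ε y / 4 < dist (X N ω) (XM M N ω)
        · exact Or.inr hd
        · left
          rw [Set.mem_preimage, Metric.mem_closedBall]
          have h1 : dist (X N ω) y < ε y / 4 := hyball
          have h2 : dist (X N ω) (XM M N ω) ≤ ε y / 4 := le_of_not_gt hd
          calc dist (XM M N ω) y ≤ dist (XM M N ω) (X N ω) + dist (X N ω) y :=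
                dist_triangle _ _ _
            _ ≤ ε y / 2 := by rw [dist_comm]; linarith
      calc P (X N ⁻¹' B) ≤ P (⋃ y ∈ T,
            ((XM M N ⁻¹' Metric.closedBall y (ε y / 2))
              ∪ {ω | ε y / 4 < dist (X N ω) (XM M N ω)})) := measure_mono hincl
        _ ≤ ∑ y ∈ T, P ((XM M N ⁻¹' Metric.closedBall y (ε y / 2))
              ∪ {ω | ε y / 4 < dist (X N ω) (XM M N ω)}) := measure_biUnion_finset_le _ _
        _ ≤ _ := Finset.sum_le_sum (fun y _ => measure_union_le _ _)
    have hfinal : atTop.limsup (scaledLogProb P X B) ≤ (s₂ : EReal) :=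
      limsup_scaled_le_of_expUB (hsumUB.mono_p hdom)
    exact absurd hs₂2 (not_lt.mpr hfinal)
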